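/- arXiv:2407.19963 — 2 statements merged into one kernel-verified Lean document; each statement's English description precedes it below -/
import Mathlib

section
/- Let p and q be complex polynomials with p not identically zero, let d := deg q ≥ 1, let c₀ be the leading coefficient of q, let c ∈ ℂ, and let f be the unique entire function with f(0) = c and f'(z) = p(z)·exp(q(z)) for all z ∈ ℂ. For 1 ≤ k ≤ d set φ_k := ((2k+1)π − arg c₀)/d. Then for each k ∈ {1,…,d} there exists a_k ∈ ℂ such that for every ε with 0 < ε < π/(2d): f(ρ·e^{iθ}) → a_k as ρ → ∞, uniformly over all θ ∈ ℝ with |θ − φ_k| ≤ π/(2d) − ε; that is, for every δ > 0 there exists R > 0 such that |f(ρ·e^{iθ}) − a_k| ≤ δ whenever ρ ≥ R and |θ − φ_k| ≤ π/(2d) − ε. -/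
open Real Filter MeasureTheory intervalIntegral Set

-- polynomial growth bound
lemma aux_poly_abs_le (r : Polynomial ℂ) :
    ∃ C : ℝ, 0 ≤ C ∧ ∀ z : ℂ, 1 ≤ ‖z‖ →
      ‖r.eval z‖ ≤ C * ‖z‖ ^ r.natDegree := by
  refine ⟨∑ i ∈ Finset.range (r.natDegree + 1), ‖r.coeff i‖,
    Finset.sum_nonneg fun i _ => norm_nonneg _, fun z hz => ?_⟩
  rw [Polynomial.eval_eq_sum_range, Finset.sum_mul]
  refine (norm_sum_le _ _).trans (Finset.sum_le_sum fun i hi => ?_)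
  rw [norm_mul, norm_pow]
  exact mul_le_mul_of_nonneg_left
    (pow_le_pow_right₀ hz (Nat.lt_succ_iff.mp (Finset.mem_range.mp hi)))
    (norm_nonneg _)

-- FTC along a C¹ path
lemma aux_ftc_path (f : ℂ → ℂ) (hf : Differentiable ℂ f) (hc : Continuous (deriv f))
    (γ γ' : ℝ → ℂ) (hγ : ∀ t, HasDerivAt γ (γ' t) t) (hγ' : Continuous γ')
    (a b : ℝ) :
    f (γ b) - f (γ a) = ∫ t in a..b, deriv f (γ t) * γ' t := by
  have hγc : Continuous γ := by
    refine continuous_iff_continuousAt.mpr fun t => (hγ t).continuousAt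
  have h : ∀ t ∈ Set.uIcc a b, HasDerivAt (fun s => f (γ s)) (deriv f (γ t) * γ' t) t := by
    intro t _
    exact ((hf (γ t)).hasDerivAt).comp t (hγ t)
  rw [intervalIntegral.integral_eq_sub_of_hasDerivAt h
    (((hc.comp hγc).mul hγ').intervalIntegrable a b)]

-- integral of decaying exponential
lemma aux_exp_integral_le {β a b : ℝ} (hβ : 0 < β) (hab : a ≤ b) :
    ∫ t in a..b, Real.exp (-(β * t)) ≤ Real.exp (-(β * a)) / β := by
  have hderiv : ∀ t ∈ Set.uIcc a b,
      HasDerivAt (fun t => -(Real.exp (-(β * t)) / β)) (Real.exp (-(β * t))) t := by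
    intro t _
    have h1 : HasDerivAt (fun t : ℝ => -(β * t)) (-β) t := by
      exact (((hasDerivAt_id t).const_mul β).neg).congr_deriv (by ring)
    have h2 : HasDerivAt (fun t => -(Real.exp (-(β * t)) / β)) (-(Real.exp (-(β * t)) * -β / β)) t :=
      (h1.exp.div_const β).neg
    convert h2 using 1
    field_simp
  rw [intervalIntegral.integral_eq_sub_of_hasDerivAt hderiv
    ((Real.continuous_exp.comp (by continuity)).intervalIntegrable a b)]
  have : 0 ≤ Real.exp (-(β * b)) / β := by positivity
  linarith

-- x^n exp(-bx) → 0
lemma aux_tendsto_pow_mul_exp_neg_mul (n : ℕ) {b : ℝ} (hb : 0 < b) :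
    Tendsto (fun x : ℝ => x ^ n * Real.exp (-(b * x))) atTop (nhds 0) := by
  have h1 := tendsto_pow_mul_exp_neg_atTop_nhds_zero n
  have h2 : Tendsto (fun x : ℝ => b * x) atTop atTop :=
    (tendsto_id.const_mul_atTop hb)
  have h3 := (h1.comp h2).mul_const (1 / b ^ n)
  rw [zero_mul] at h3
  refine h3.congr fun x => ?_
  simp only [Function.comp]
  rw [mul_pow]
  field_simp

theorem stmt10
    (p q : Polynomial ℂ) (hp : p ≠ 0) (hq : 1 ≤ q.natDegree) (c : ℂ)
    (f : ℂ → ℂ) (hf : Differentiable ℂ f) (hf0 : f 0 = c)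
    (hf' : ∀ z : ℂ, deriv f z = p.eval z * Complex.exp (q.eval z)) :
    ∀ k : ℕ, 1 ≤ k → k ≤ q.natDegree →
      ∃ a : ℂ, ∀ ε : ℝ, 0 < ε → ε < Real.pi / (2 * (q.natDegree : ℝ)) →
        ∀ δ : ℝ, 0 < δ → ∃ R : ℝ, 0 < R ∧
          ∀ ρ θ : ℝ, R ≤ ρ →
            |θ - ((2 * (k : ℝ) + 1) * Real.pi - Complex.arg q.leadingCoeff) /
                (q.natDegree : ℝ)| ≤ Real.pi / (2 * (q.natDegree : ℝ)) - ε →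
            ‖f ((ρ : ℂ) * Complex.exp ((θ : ℂ) * Complex.I)) - a‖ ≤ δ := by
  intro k hk1 hk2
  have hq0 : q ≠ 0 := fun h => by simp [h] at hq
  set d : ℕ := q.natDegree with hd
  have hdR : (0:ℝ) < d := by exact_mod_cast Nat.lt_of_lt_of_le Nat.zero_lt_one hq
  set c₀ : ℂ := q.leadingCoeff with hc₀def
  have hc₀ : c₀ ≠ 0 := Polynomial.leadingCoeff_ne_zero.mpr hq0
  have hc₀abs : 0 < ‖c₀‖ := norm_pos_iff.mpr hc₀
  set φ : ℝ := ((2 * (k:ℝ) + 1) * Real.pi - Complex.arg c₀) / d with hφdef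
  have hderiv_cont : Continuous (deriv f) := by
    have : deriv f = fun z => p.eval z * Complex.exp (q.eval z) := funext hf'
    rw [this]
    exact (p.continuous_aeval.mul (Complex.continuous_exp.comp q.continuous_aeval))
  -- key sector bound
  have key : ∀ ε : ℝ, 0 < ε → ε < Real.pi / (2 * d) →
      ∃ β : ℝ, 0 < β ∧ ∃ R : ℝ, 1 ≤ R ∧ ∀ ρ θ : ℝ, R ≤ ρ →
        |θ - φ| ≤ Real.pi / (2 * d) - ε →
        ‖deriv f ((ρ : ℂ) * Complex.exp ((θ:ℂ) * Complex.I))‖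
          ≤ Real.exp (-(β * ρ)) := by
    intro ε hε hε2
    obtain ⟨Cp, hCp0, hCp⟩ := aux_poly_abs_le p
    obtain ⟨Ce, hCe0, hCe⟩ := aux_poly_abs_le q.eraseLead
    have hdε : 0 < (d:ℝ) * ε := mul_pos hdR hε
    have hdε2 : (d:ℝ) * ε < Real.pi / 2 := by
      rw [lt_div_iff₀ (by positivity : (0:ℝ) < 2 * d)] at hε2
      nlinarith
    have hm : 0 < Real.sin ((d:ℝ) * ε) :=
      Real.sin_pos_of_pos_of_lt_pi hdε (hdε2.trans (by linarith [Real.pi_pos]))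
    set m := Real.sin ((d:ℝ) * ε) with hmdef
    set β := m * ‖c₀‖ / 4 with hβdef
    have hβ : 0 < β := by positivity
    have htend := (aux_tendsto_pow_mul_exp_neg_mul p.natDegree hβ).const_mul Cp
    rw [mul_zero] at htend
    obtain ⟨R₂, hR₂⟩ := (htend.eventually (eventually_le_nhds zero_lt_one)).exists_forall_of_atTop
    refine ⟨β, hβ, max (max 1 R₂) (4 * Ce / (m * ‖c₀‖)), le_max_of_le_left (le_max_left _ _), ?_⟩
    intro ρ θ hρ hθ
    have hρ1 : (1:ℝ) ≤ ρ := le_trans (le_max_of_le_left (le_max_left _ _)) hρ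
    have hρ0 : (0:ℝ) < ρ := lt_of_lt_of_le zero_lt_one hρ1
    set z : ℂ := (ρ:ℂ) * Complex.exp ((θ:ℂ) * Complex.I) with hzdef
    have hzabs : ‖z‖ = ρ := by
      rw [hzdef, norm_mul, Complex.norm_real, Real.norm_eq_abs, Complex.norm_exp_ofReal_mul_I,
        abs_of_pos hρ0, mul_one]
    -- split q
    have hsplit : q.eval z = q.eraseLead.eval z + c₀ * z ^ d := by
      conv_lhs => rw [← q.eraseLead_add_C_mul_X_pow]
      rw [Polynomial.eval_add, Polynomial.eval_mul, Polynomial.eval_C,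
        Polynomial.eval_pow, Polynomial.eval_X]
    have hzd : c₀ * z ^ d
        = ((‖c₀‖ * ρ ^ d : ℝ) : ℂ) *
          Complex.exp (((Complex.arg c₀ + (d:ℝ) * θ : ℝ) : ℂ) * Complex.I) := by
      have h1 : z ^ d = (ρ:ℂ)^d * Complex.exp ((d:ℂ) * ((θ:ℂ) * Complex.I)) := by
        rw [hzdef, mul_pow, Complex.exp_nat_mul]
      rw [h1]
      conv_lhs => rw [← Complex.norm_mul_exp_arg_mul_I c₀]
      push_cast
      rw [add_mul, Complex.exp_add]
      ring
    have hre1 : (c₀ * z ^ d).re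
        = ‖c₀‖ * ρ ^ d * Real.cos (Complex.arg c₀ + (d:ℝ) * θ) := by
      rw [hzd, Complex.re_ofReal_mul, Complex.exp_ofReal_mul_I_re]
    have hang : Complex.arg c₀ + (d:ℝ) * θ
        = (d:ℝ) * (θ - φ) + (2 * (k:ℝ) + 1) * Real.pi := by
      rw [hφdef]
      field_simp
      ring
    have hcos : Real.cos (Complex.arg c₀ + (d:ℝ) * θ) ≤ -m := by
      rw [hang]
      have h1 : (d:ℝ) * (θ - φ) + (2 * (k:ℝ) + 1) * Real.pi
          = ((d:ℝ) * (θ - φ) + Real.pi) + (k:ℤ) * (2 * Real.pi) := by push_cast; ring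
      rw [h1, Real.cos_add_int_mul_two_pi, Real.cos_add_pi, neg_le_neg_iff]
      rw [← Real.cos_abs ((d:ℝ) * (θ - φ))]
      have habs : |(d:ℝ) * (θ - φ)| ≤ Real.pi / 2 - (d:ℝ) * ε := by
        rw [abs_mul, abs_of_pos hdR]
        have h2 := mul_le_mul_of_nonneg_left hθ (le_of_lt hdR)
        have h3 : (d:ℝ) * (Real.pi / (2 * d) - ε) = Real.pi / 2 - (d:ℝ) * ε := by
          field_simp
        linarith
      have h4 := Real.cos_le_cos_of_nonneg_of_le_pi (abs_nonneg _)
        (by linarith [Real.pi_pos]) habs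
      rwa [Real.cos_pi_div_two_sub] at h4
    have herase : ‖q.eraseLead.eval z‖ ≤ Ce * ρ ^ (d - 1) := by
      refine (hCe z (by rw [hzabs]; exact hρ1)).trans ?_
      rw [hzabs]
      exact mul_le_mul_of_nonneg_left
        (pow_le_pow_right₀ hρ1 q.eraseLead_natDegree_le) hCe0
    have hre : (q.eval z).re ≤ -(‖c₀‖ * m) * ρ ^ d + Ce * ρ ^ (d - 1) := by
      rw [hsplit, Complex.add_re, hre1]
      have h5 := (Complex.re_le_norm (q.eraseLead.eval z)).trans herase
      have h6 : ‖c₀‖ * ρ ^ d * Real.cos (Complex.arg c₀ + (d:ℝ) * θ)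
          ≤ ‖c₀‖ * ρ ^ d * (-m) :=
        mul_le_mul_of_nonneg_left hcos (by positivity)
      nlinarith
    -- now use ρ large
    have hRρ : 4 * Ce / (m * ‖c₀‖) ≤ ρ :=
      le_trans (le_max_right _ _) hρ
    have hCeρ : 4 * Ce ≤ m * ‖c₀‖ * ρ := by
      rw [div_le_iff₀ (by positivity)] at hRρ
      linarith
    have hpowd : ρ ^ d = ρ ^ (d - 1) * ρ := by
      rw [← pow_succ, Nat.sub_add_cancel hq]
    have hρd : ρ ≤ ρ ^ d := le_self_pow₀ hρ1 (by omega)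
    have hre2 : (q.eval z).re ≤ -(2 * β * ρ) := by
      have h7 : Ce * ρ ^ (d - 1) ≤ m * ‖c₀‖ / 4 * ρ ^ d := by
        rw [hpowd]
        have h7' := mul_le_mul_of_nonneg_right hCeρ (pow_nonneg (le_of_lt hρ0) (d - 1))
        linarith
      have h8 : m * ‖c₀‖ / 2 * ρ ≤ m * ‖c₀‖ / 2 * ρ ^ d :=
        mul_le_mul_of_nonneg_left hρd (by positivity)
      have h9 : (0:ℝ) ≤ m * ‖c₀‖ * ρ ^ d := by positivity
      rw [show -(2 * β * ρ) = -(m * ‖c₀‖ / 2 * ρ) by rw [hβdef]; ring]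
      linarith
    have hpz : ‖p.eval z‖ ≤ Cp * ρ ^ p.natDegree := by
      have := hCp z (by rw [hzabs]; exact hρ1)
      rwa [hzabs] at this
    have habsd : ‖deriv f z‖
        = ‖p.eval z‖ * Real.exp ((q.eval z).re) := by
      rw [hf', norm_mul, Complex.norm_exp]
    rw [habsd]
    calc ‖p.eval z‖ * Real.exp ((q.eval z).re)
        ≤ Cp * ρ ^ p.natDegree * Real.exp (-(2 * β * ρ)) := by
          exact mul_le_mul hpz (Real.exp_le_exp.mpr hre2)
            (le_of_lt (Real.exp_pos _)) (by positivity)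
      _ = Cp * (ρ ^ p.natDegree * Real.exp (-(β * ρ))) * Real.exp (-(β * ρ)) := by
          rw [show -(2*β*ρ) = -(β*ρ) + -(β*ρ) by ring, Real.exp_add]
          ring
      _ ≤ 1 * Real.exp (-(β * ρ)) := by
          refine mul_le_mul_of_nonneg_right ?_ (le_of_lt (Real.exp_pos _))
          exact hR₂ ρ (le_trans (le_max_of_le_left (le_max_right _ _)) hρ)
      _ = Real.exp (-(β * ρ)) := one_mul _
    -- base ray data with ε₀ = π/(4d)
  have hε₀1 : 0 < Real.pi / (4 * (d:ℝ)) := by positivity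
  have hε₀2 : Real.pi / (4 * (d:ℝ)) < Real.pi / (2 * (d:ℝ)) := by
    apply div_lt_div_of_pos_left Real.pi_pos (by positivity)
    nlinarith
  obtain ⟨β₀, hβ₀, R₀, hR₀1, hkey₀⟩ := key _ hε₀1 hε₀2
  have hφsec : ∀ ε' : ℝ, ε' < Real.pi / (2 * (d:ℝ)) → |φ - φ| ≤ Real.pi / (2 * (d:ℝ)) - ε' := by
    intro ε' h
    rw [sub_self, abs_zero]
    linarith
  set e₀ : ℂ := Complex.exp ((φ:ℂ) * Complex.I) with he₀
  set g₀ : ℝ → ℂ := fun t => deriv f ((t:ℂ) * e₀) * e₀ with hg₀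
  have hcast : Continuous (fun t : ℝ => (t:ℂ)) := Complex.continuous_ofReal
  have hg₀cont : Continuous g₀ :=
    (hderiv_cont.comp (hcast.mul continuous_const)).mul continuous_const
  have habse₀ : ‖e₀‖ = 1 := Complex.norm_exp_ofReal_mul_I φ
  have hg₀norm : ∀ t : ℝ, R₀ ≤ t → ‖g₀ t‖ ≤ Real.exp (-(β₀ * t)) := by
    intro t ht
    have hk := hkey₀ t φ ht (hφsec _ hε₀2)
    calc ‖g₀ t‖ = ‖deriv f ((t:ℂ) * e₀)‖ * 1 := by
          rw [hg₀]
          simp [norm_mul, habse₀]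
      _ ≤ Real.exp (-(β₀ * t)) := by rw [mul_one]; exact hk
  have hint : IntegrableOn g₀ (Set.Ioi R₀) := by
    have hi := exp_neg_integrableOn_Ioi R₀ hβ₀
    simp only [neg_mul] at hi
    refine Integrable.mono' hi hg₀cont.aestronglyMeasurable ?_
    exact (ae_restrict_iff' measurableSet_Ioi).mpr
      (ae_of_all _ fun t ht => hg₀norm t (le_of_lt ht))
  set a : ℂ := f ((R₀:ℂ) * e₀) + ∫ t in Set.Ioi R₀, g₀ t with hadef
  refine ⟨a, ?_⟩
  intro ε hε hε2 δ hδ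
  obtain ⟨β, hβ, R₁, hR₁1, hkeyε⟩ := key ε hε hε2
  have hray_eq : ∀ b : ℝ, f ((b:ℂ) * e₀) = f ((R₀:ℂ) * e₀) + ∫ t in R₀..b, g₀ t := by
    intro b
    have hγ : ∀ t : ℝ, HasDerivAt (fun s : ℝ => (s:ℂ) * e₀) e₀ t := by
      intro t
      simpa using ((hasDerivAt_id ((t:ℝ):ℂ)).mul_const e₀).comp_ofReal
    have h := aux_ftc_path f hf hderiv_cont _ (fun _ => e₀) hγ continuous_const R₀ b
    rw [hg₀]
    linear_combination h
  have htail_tendsto : Tendsto (fun b : ℝ => ∫ t in R₀..b, g₀ t) atTop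
      (nhds (∫ t in Set.Ioi R₀, g₀ t)) :=
    intervalIntegral_tendsto_integral_Ioi R₀ hint tendsto_id
  have hray : Tendsto (fun b : ℝ => f ((b:ℂ) * e₀)) atTop (nhds a) := by
    rw [hadef]
    exact (tendsto_const_nhds.add htail_tendsto).congr fun b => (hray_eq b).symm
  set Rm : ℝ := max R₀ R₁ with hRm
  have htail : ∀ ρ : ℝ, Rm ≤ ρ →
      ‖f ((ρ:ℂ) * e₀) - a‖ ≤ Real.exp (-(β * ρ)) / β := by
    intro ρ hρ
    have hseg : ∀ b : ℝ, ρ ≤ b →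
        ‖f ((b:ℂ) * e₀) - f ((ρ:ℂ) * e₀)‖ ≤ Real.exp (-(β * ρ)) / β := by
      intro b hb
      have h1 : f ((b:ℂ) * e₀) - f ((ρ:ℂ) * e₀) = ∫ t in ρ..b, g₀ t := by
        rw [hray_eq b, hray_eq ρ, add_sub_add_left_eq_sub]
        have hii : ∀ u v : ℝ, IntervalIntegrable g₀ MeasureTheory.volume u v :=
          fun u v => hg₀cont.intervalIntegrable u v
        exact intervalIntegral.integral_interval_sub_left (hii R₀ b) (hii R₀ ρ)
      have h2 : ‖∫ t in ρ..b, g₀ t‖ ≤ |∫ t in ρ..b, Real.exp (-(β * t))| := by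
        refine intervalIntegral.norm_integral_le_abs_of_norm_le ?_
          ((Real.continuous_exp.comp ((continuous_const.mul continuous_id).neg)).intervalIntegrable ρ b)
        refine (ae_restrict_iff' measurableSet_uIoc).mpr (ae_of_all _ fun t ht => ?_)
        rw [Set.uIoc_of_le hb] at ht
        have htρ : ρ ≤ t := ht.1.le
        have hk := hkeyε t φ
          (le_trans (le_trans (le_max_right _ _) hρ) htρ) (hφsec ε hε2)
        calc ‖g₀ t‖ = ‖deriv f ((t:ℂ) * e₀)‖ * 1 := by
              rw [hg₀]
              simp [norm_mul, habse₀]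
          _ ≤ Real.exp (-(β * t)) := by rw [mul_one]; exact hk
      have h3 : |∫ t in ρ..b, Real.exp (-(β * t))| ≤ Real.exp (-(β * ρ)) / β := by
        rw [abs_of_nonneg (intervalIntegral.integral_nonneg hb
          fun t _ => (Real.exp_pos _).le)]
        exact aux_exp_integral_le hβ hb
      calc ‖f ((b:ℂ) * e₀) - f ((ρ:ℂ) * e₀)‖
          = ‖∫ t in ρ..b, g₀ t‖ := by rw [h1]
        _ ≤ Real.exp (-(β * ρ)) / β := le_trans h2 h3
    have h4 : Tendsto (fun b : ℝ => ‖f ((b:ℂ) * e₀) - f ((ρ:ℂ) * e₀)‖)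
        atTop (nhds (‖a - f ((ρ:ℂ) * e₀)‖)) :=
      (continuous_norm.tendsto _).comp (hray.sub tendsto_const_nhds)
    have h5 := le_of_tendsto h4 (eventually_atTop.mpr ⟨ρ, hseg⟩)
    rwa [norm_sub_rev]
  have harc : ∀ ρ θ : ℝ, Rm ≤ ρ → |θ - φ| ≤ Real.pi / (2 * (d:ℝ)) - ε →
      ‖f ((ρ:ℂ) * Complex.exp ((θ:ℂ) * Complex.I)) - f ((ρ:ℂ) * e₀)‖
        ≤ Real.exp (-(β * ρ)) * ρ * Real.pi := by
    intro ρ θ hρ hθ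
    have hρ1 : (1:ℝ) ≤ ρ := le_trans hR₁1 (le_trans (le_max_right _ _) hρ)
    have hρ0 : (0:ℝ) < ρ := lt_of_lt_of_le zero_lt_one hρ1
    set γ : ℝ → ℂ := fun t => (ρ:ℂ) * Complex.exp ((t:ℂ) * Complex.I) with hγdef
    set γ' : ℝ → ℂ := fun t => (ρ:ℂ) * Complex.exp ((t:ℂ) * Complex.I) * Complex.I
      with hγ'def
    have hγd : ∀ t : ℝ, HasDerivAt γ (γ' t) t := by
      intro t
      have h1 : HasDerivAt (fun w : ℂ => (ρ:ℂ) * Complex.exp (w * Complex.I))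
          ((ρ:ℂ) * Complex.exp (((t:ℝ):ℂ) * Complex.I) * Complex.I) (((t:ℝ):ℂ)) := by
        have h0 := (((hasDerivAt_id (((t:ℝ):ℂ))).mul_const Complex.I).cexp).const_mul (ρ:ℂ)
        simpa [mul_assoc, mul_comm, mul_left_comm] using h0
      exact h1.comp_ofReal
    have hγ'c : Continuous γ' :=
      ((continuous_const.mul ((Complex.continuous_exp.comp
        (hcast.mul continuous_const)))).mul continuous_const)
    have h1 := aux_ftc_path f hf hderiv_cont γ γ' hγd hγ'c φ θ
    have h2 : ‖∫ t in φ..θ, deriv f (γ t) * γ' t‖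
        ≤ Real.exp (-(β * ρ)) * ρ * |θ - φ| := by
      refine intervalIntegral.norm_integral_le_of_norm_le_const fun t ht => ?_
      have htφ : |t - φ| ≤ |θ - φ| := by
        rcases le_total φ θ with h | h
        · rw [Set.uIoc_of_le h] at ht
          rw [abs_of_nonneg (by linarith [ht.1.le] : (0:ℝ) ≤ t - φ),
            abs_of_nonneg (by linarith : (0:ℝ) ≤ θ - φ)]
          linarith [ht.2]
        · rw [Set.uIoc_of_ge h] at ht
          rw [abs_of_nonpos (by linarith [ht.2] : t - φ ≤ 0),
            abs_of_nonpos (by linarith : θ - φ ≤ 0)]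
          linarith [ht.1.le]
      have hk := hkeyε ρ t (le_trans (le_max_right _ _) hρ) (le_trans htφ hθ)
      calc ‖deriv f (γ t) * γ' t‖
          = ‖deriv f ((ρ:ℂ) * Complex.exp ((t:ℂ) * Complex.I))‖ * ρ := by
            rw [hγdef, hγ'def]
            simp only [norm_mul, Complex.norm_real, Real.norm_eq_abs,
              Complex.norm_exp_ofReal_mul_I, Complex.norm_I, abs_of_pos hρ0]
            ring
        _ ≤ Real.exp (-(β * ρ)) * ρ := mul_le_mul_of_nonneg_right hk hρ0.le
    have hθπ : |θ - φ| ≤ Real.pi := by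
      have hπ2 : Real.pi / (2 * (d:ℝ)) ≤ Real.pi / 2 := by
        apply div_le_div_of_nonneg_left Real.pi_pos.le (by norm_num)
        have hd1 : (1:ℝ) ≤ (d:ℝ) := by exact_mod_cast hq
        linarith
      linarith [Real.pi_pos]
    calc ‖f ((ρ:ℂ) * Complex.exp ((θ:ℂ) * Complex.I)) - f ((ρ:ℂ) * e₀)‖
        = ‖∫ t in φ..θ, deriv f (γ t) * γ' t‖ := by rw [← h1]
      _ ≤ Real.exp (-(β * ρ)) * ρ * |θ - φ| := h2
      _ ≤ Real.exp (-(β * ρ)) * ρ * Real.pi :=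
          mul_le_mul_of_nonneg_left hθπ (by positivity)
  have htend0 : Tendsto (fun ρ : ℝ => Real.exp (-(β * ρ)) * ρ * Real.pi
      + Real.exp (-(β * ρ)) / β) atTop (nhds 0) := by
    have h1 := (aux_tendsto_pow_mul_exp_neg_mul 1 hβ).mul_const Real.pi
    have h2 := (aux_tendsto_pow_mul_exp_neg_mul 0 hβ).div_const β
    rw [zero_mul] at h1
    rw [zero_div] at h2
    have h3 := h1.add h2
    rw [add_zero] at h3
    refine h3.congr fun ρ => ?_
    simp only [pow_one, pow_zero, one_mul]
    ring
  obtain ⟨R₂, hR₂⟩ := (htend0.eventually (eventually_le_nhds hδ)).exists_forall_of_atTop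
  refine ⟨max Rm R₂, lt_of_lt_of_le zero_lt_one
    (le_trans (le_trans hR₁1 (le_max_right R₀ R₁)) (le_max_left Rm R₂)), ?_⟩
  intro ρ θ hρ hθ
  have hρm : Rm ≤ ρ := le_trans (le_max_left _ _) hρ
  have harcρ := harc ρ θ hρm hθ
  have htailρ := htail ρ hρm
  have htri := norm_sub_le_norm_sub_add_norm_sub
    (f ((ρ:ℂ) * Complex.exp ((θ:ℂ) * Complex.I))) (f ((ρ:ℂ) * e₀)) a
  have hb := hR₂ ρ (le_trans (le_max_right _ _) hρ)
  linarith
end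

section
/- Let f₂ be the unique entire function with f₂(0) = 0 and f₂'(z) = 2·exp(−z²) for all z ∈ ℂ. Then there exists a unique x > 0 (x real) with f₂(x) = x; moreover, for this x one has 0 < |f₂'(x)| < 1, so x is an attracting fixed point of f₂. -/
open intervalIntegral Set

noncomputable def g2 (x : ℝ) : ℝ := ∫ t in (0:ℝ)..x, 2 * Real.exp (-t^2)

lemma contInteg : Continuous (fun t : ℝ => 2 * Real.exp (-t^2)) := by
  continuity

lemma g2_hasDerivAt (x : ℝ) : HasDerivAt g2 (2 * Real.exp (-x^2)) x :=
  (contInteg.integral_hasStrictDerivAt 0 x).hasDerivAt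

lemma g2_zero : g2 0 = 0 := intervalIntegral.integral_same

noncomputable def h2 (x : ℝ) : ℝ := g2 x - x

lemma h2_hasDerivAt (x : ℝ) : HasDerivAt h2 (2 * Real.exp (-x^2) - 1) x :=
  (g2_hasDerivAt x).sub (hasDerivAt_id x)

lemma h2_diff : Differentiable ℝ h2 := fun x => (h2_hasDerivAt x).differentiableAt

lemma h2_zero : h2 0 = 0 := by simp [h2, g2_zero]

-- strict Rolle consequence: between equal values of h2 there is c with 2 exp(-c²) = 1
lemma rolle_c {a b : ℝ} (hab : a < b) (hh : h2 a = h2 b) :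
    ∃ c ∈ Set.Ioo a b, 2 * Real.exp (-c^2) = 1 := by
  obtain ⟨c, hc, hc0⟩ := exists_deriv_eq_zero hab h2_diff.continuous.continuousOn hh
  refine ⟨c, hc, ?_⟩
  have := (h2_hasDerivAt c).deriv
  rw [this] at hc0
  linarith

lemma exp_quarter_lt_two : Real.exp (4⁻¹) < 2 := by
  nlinarith [Real.exp_one_lt_d9, Real.exp_pos (4⁻¹ : ℝ),
    Real.exp_nat_mul (4⁻¹ : ℝ) 4, sq_nonneg (Real.exp (4⁻¹) - 2)]

lemma h2_half_pos : 0 < h2 (1/2) := by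
  have hle : Real.exp (-(4:ℝ)⁻¹) ≤ g2 (1/2) := by
    have : ∫ t in (0:ℝ)..(1/2), 2 * Real.exp (-(4:ℝ)⁻¹) ≤ g2 (1/2) := by
      apply intervalIntegral.integral_mono_on (by norm_num)
        (intervalIntegrable_const) (contInteg.intervalIntegrable _ _)
      intro x hx
      have h1 : x^2 ≤ (4:ℝ)⁻¹ := by nlinarith [hx.1, hx.2]
      have := Real.exp_le_exp.mpr (neg_le_neg h1)
      linarith
    rwa [intervalIntegral.integral_const, smul_eq_mul, show ((1:ℝ)/2 - 0) * (2 * Real.exp (-(4:ℝ)⁻¹)) = Real.exp (-(4:ℝ)⁻¹) by ring] at this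
  have h2' : (1:ℝ)/2 < Real.exp (-(4:ℝ)⁻¹) := by
    rw [Real.exp_neg]
    have hp := Real.exp_pos (4⁻¹ : ℝ)
    have hlt := exp_quarter_lt_two
    have h1 : Real.exp 4⁻¹ * (Real.exp 4⁻¹)⁻¹ = 1 := mul_inv_cancel₀ (ne_of_gt hp)
    nlinarith [inv_pos.mpr hp]
  unfold h2
  linarith

lemma h2_three_neg : h2 3 < 0 := by
  have hsplit : g2 3 = (∫ t in (0:ℝ)..1, 2 * Real.exp (-t^2)) + ∫ t in (1:ℝ)..3, 2 * Real.exp (-t^2) := by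
    unfold g2
    rw [intervalIntegral.integral_add_adjacent_intervals
      (contInteg.intervalIntegrable _ _) (contInteg.intervalIntegrable _ _)]
  have h1 : (∫ t in (0:ℝ)..1, 2 * Real.exp (-t^2)) ≤ 2 := by
    have : (∫ t in (0:ℝ)..1, 2 * Real.exp (-t^2)) ≤ ∫ t in (0:ℝ)..1, (2:ℝ) := by
      apply intervalIntegral.integral_mono_on (by norm_num)
        (contInteg.intervalIntegrable _ _) intervalIntegrable_const
      intro x _
      nlinarith [Real.exp_le_one_iff.mpr (by nlinarith [sq_nonneg x] : -x^2 ≤ 0)]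
    simpa using this
  have h2' : (∫ t in (1:ℝ)..3, 2 * Real.exp (-t^2)) ≤ 2 * Real.exp (-1) - 2 * Real.exp (-3) := by
    have hstep : (∫ t in (1:ℝ)..3, 2 * Real.exp (-t^2)) ≤ ∫ t in (1:ℝ)..3, 2 * Real.exp (-t) := by
      apply intervalIntegral.integral_mono_on (by norm_num)
        (contInteg.intervalIntegrable _ _)
        ((continuous_const.mul (Real.continuous_exp.comp continuous_neg)).intervalIntegrable _ _)
      intro x hx
      have : -x^2 ≤ -x := by nlinarith [hx.1, hx.2]
      simp only [Pi.mul_apply, Function.comp_apply]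
      nlinarith [Real.exp_le_exp.mpr this, Real.exp_pos (-x^2)]
    have hval : (∫ t in (1:ℝ)..3, 2 * Real.exp (-t)) = 2 * Real.exp (-1) - 2 * Real.exp (-3) := by
      have : ∀ t ∈ Set.uIcc (1:ℝ) 3, HasDerivAt (fun s => -2 * Real.exp (-s)) (2 * Real.exp (-t)) t := by
        intro t _
        have := ((Real.hasDerivAt_exp (-t)).comp t (hasDerivAt_neg t)).const_mul (-2)
        simpa using this
      rw [intervalIntegral.integral_eq_sub_of_hasDerivAt this
        ((continuous_const.mul (Real.continuous_exp.comp continuous_neg)).intervalIntegrable _ _)]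
      ring
    linarith
  have he : (2:ℝ) < Real.exp 1 := by nlinarith [Real.exp_one_gt_d9]
  have he1 : 2 * Real.exp (-1:ℝ) < 1 := by
    rw [Real.exp_neg]
    have hp := Real.exp_pos (1:ℝ)
    have h1 : Real.exp 1 * (Real.exp 1)⁻¹ = 1 := mul_inv_cancel₀ (ne_of_gt hp)
    nlinarith [inv_pos.mpr hp]
  have he3 : 0 < Real.exp (-3:ℝ) := Real.exp_pos _
  unfold h2
  linarith

lemma exists_root : ∃ x : ℝ, 0 < x ∧ g2 x = x := by
  have hsub : Set.Icc (h2 3) (h2 (1/2)) ⊆ h2 '' Set.Icc (1/2) 3 :=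
    intermediate_value_Icc' (by norm_num) h2_diff.continuous.continuousOn
  obtain ⟨x, hx, hx0⟩ := hsub ⟨le_of_lt h2_three_neg, le_of_lt h2_half_pos⟩
  refine ⟨x, by linarith [hx.1], ?_⟩
  unfold h2 at hx0; linarith

lemma deriv_lt {x : ℝ} (hx : 0 < x) (hfix : g2 x = x) : 2 * Real.exp (-x^2) < 1 := by
  have hx0 : h2 0 = h2 x := by unfold h2; rw [g2_zero, hfix]; ring
  obtain ⟨c, hc, hc1⟩ := rolle_c hx hx0
  have hcx : c^2 < x^2 := by nlinarith [hc.1, hc.2]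
  have := Real.exp_lt_exp.mpr (neg_lt_neg hcx)
  linarith

lemma unique_root {a b : ℝ} (ha : 0 < a) (hb : 0 < b) (hfa : g2 a = a) (hfb : g2 b = b) :
    a = b := by
  by_contra hne
  wlog hab : a < b generalizing a b
  · exact this hb ha hfb hfa (Ne.symm hne) (lt_of_le_of_ne (not_lt.mp hab) (Ne.symm hne))
  have h0a : h2 0 = h2 a := by unfold h2; rw [g2_zero, hfa]; ring
  have hab' : h2 a = h2 b := by unfold h2; rw [hfa, hfb]; ring
  obtain ⟨c, hc, hc1⟩ := rolle_c ha h0a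
  obtain ⟨d, hd, hd1⟩ := rolle_c hab hab'
  have hcd : c < d := lt_trans hc.2 hd.1
  have : Real.exp (-c^2) = Real.exp (-d^2) := by linarith
  have hsq : c^2 = d^2 := by
    have := Real.exp_injective this
    linarith
  nlinarith [hc.1, hd.1]

theorem stmt11 (f : ℂ → ℂ) (hf : Differentiable ℂ f) (hf0 : f 0 = 0)
    (hf' : ∀ z : ℂ, deriv f z = 2 * Complex.exp (-z ^ 2)) :
    (∃! x : ℝ, 0 < x ∧ f (x : ℂ) = (x : ℂ)) ∧
    ∀ x : ℝ, 0 < x → f (x : ℂ) = (x : ℂ) →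
      0 < ‖deriv f (x : ℂ)‖ ∧ ‖deriv f (x : ℂ)‖ < 1 := by
  -- f on reals agrees with g2
  have feq : ∀ x : ℝ, f x = (g2 x : ℂ) := by
    have key : ∀ x : ℝ, HasDerivAt (fun y : ℝ => f y - (g2 y : ℂ)) 0 x := by
      intro x
      have h1 : HasDerivAt (fun y : ℝ => f y) (2 * Complex.exp (-(x:ℂ)^2)) x := by
        have hd := (hf (x : ℂ)).hasDerivAt
        rw [hf'] at hd
        exact hd.comp_ofReal
      have h2c : HasDerivAt (fun y : ℝ => ((g2 y : ℂ))) ((2 * Real.exp (-x^2) : ℝ) : ℂ) x :=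
        (g2_hasDerivAt x).ofReal_comp
      have := h1.sub h2c
      have heq : 2 * Complex.exp (-(x:ℂ)^2) - ((2 * Real.exp (-x^2) : ℝ) : ℂ) = 0 := by
        push_cast [Complex.ofReal_exp]
        ring
      rwa [heq] at this
    have hconst := is_const_of_deriv_eq_zero
      (f := fun y : ℝ => f y - (g2 y : ℂ))
      (fun x => (key x).differentiableAt) (fun x => (key x).deriv)
    intro x
    have := hconst x 0
    simp [g2_zero, hf0] at this
    linear_combination this
  have fix_iff : ∀ x : ℝ, (f x = (x : ℂ)) ↔ g2 x = x := by
    intro x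
    rw [feq x]
    exact_mod_cast Iff.rfl
  constructor
  · obtain ⟨x, hx, hxfix⟩ := exists_root
    refine ⟨x, ⟨hx, (fix_iff x).mpr hxfix⟩, ?_⟩
    rintro y ⟨hy, hyfix⟩
    exact unique_root hy hx ((fix_iff y).mp hyfix) hxfix
  · intro x hx hxfix
    have hg : g2 x = x := (fix_iff x).mp hxfix
    have habs : ‖deriv f (x : ℂ)‖ = 2 * Real.exp (-x^2) := by
      rw [hf']
      rw [norm_mul, Complex.norm_exp]
      have : (-(x:ℂ)^2).re = -x^2 := by
        simp [pow_two]
      rw [this]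
      simp
    rw [habs]
    constructor
    · positivity
    · exact deriv_lt hx hg
end
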